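/- arXiv:1011.2933 — 6 statements merged into one kernel-verified Lean document; each statement's English description precedes it below -/
import Mathlib

section
/- Let S : V → V be a linear operator on a vector space V whose range M is finite dimensional. Then I - S is injective if and only if I - S is surjective. -/
theorem stmt_3 {K V : Type*} [Field K] [AddCommGroup V] [Module K V]
    (S : V →ₗ[K] V) [FiniteDimensional K ↥(LinearMap.range S)] :
    Function.Injective ⇑((LinearMap.id : V →ₗ[K] V) - S) ↔
      Function.Surjective ⇑((LinearMap.id : V →ₗ[K] V) - S) := by
  have hS : ∀ x ∈ LinearMap.range S, S x ∈ LinearMap.range S :=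
    fun x _ => LinearMap.mem_range_self S x
  set f : LinearMap.range S →ₗ[K] LinearMap.range S :=
    LinearMap.id - S.restrict hS with hf
  have coe_f : ∀ a : LinearMap.range S, (f a : V) = (a : V) - S a := fun a => rfl
  have key : Function.Injective f ↔ Function.Surjective f :=
    LinearMap.injective_iff_surjective
  constructor
  · intro hinj
    have finj : Function.Injective f := by
      intro a b hab
      apply Subtype.ext
      apply hinj
      have h := congrArg Subtype.val hab
      rw [coe_f, coe_f] at h
      simpa using h
    have fsurj := key.mp finj
    intro y
    obtain ⟨m, hm⟩ := fsurj ⟨S y, LinearMap.mem_range_self S y⟩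
    have hm' : (m : V) - S m = S y := by
      have := congrArg Subtype.val hm
      rwa [coe_f] at this
    refine ⟨y + m, ?_⟩
    simp only [LinearMap.sub_apply, LinearMap.id_apply, map_add]
    rw [← hm']
    abel
  · intro hsurj
    have fsurj : Function.Surjective f := by
      intro m
      obtain ⟨x, hx⟩ := hsurj (m : V)
      simp only [LinearMap.sub_apply, LinearMap.id_apply] at hx
      have hxM : x ∈ LinearMap.range S := by
        have : x = (m : V) + S x := by rw [← hx]; abel
        rw [this]
        exact Submodule.add_mem _ m.2 (LinearMap.mem_range_self S x)
      exact ⟨⟨x, hxM⟩, Subtype.ext (by rw [coe_f]; exact hx)⟩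
    have finj := key.mpr fsurj
    intro a b hab
    simp only [LinearMap.sub_apply, LinearMap.id_apply] at hab
    have h1 : a - b = S a - S b := sub_eq_sub_iff_sub_eq_sub.mp hab
    have hmem : a - b ∈ LinearMap.range S := by
      rw [h1, ← map_sub]; exact LinearMap.mem_range_self S _
    have : f ⟨a - b, hmem⟩ = 0 := by
      apply Subtype.ext
      rw [coe_f]
      simp only [Submodule.coe_zero, map_sub]
      rw [h1]
      abel
    have := finj (by rw [this, map_zero] : f ⟨a - b, hmem⟩ = f 0)
    have h0 : a - b = 0 := congrArg Subtype.val this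
    exact sub_eq_zero.mp h0
end

section
/- Let R : V → V be a bijective linear operator on a vector space V and let F : V → V be a linear operator with finite-dimensional range. Then R - F is injective if and only if R - F is surjective. -/
theorem aux_fredholm {K V : Type*} [Field K] [AddCommGroup V] [Module K V]
    (G : V →ₗ[K] V) [FiniteDimensional K ↥(LinearMap.range G)] :
    Function.Injective ⇑((LinearMap.id : V →ₗ[K] V) - G) ↔ Function.Surjective ⇑((LinearMap.id : V →ₗ[K] V) - G) := by
  set W := LinearMap.range G with hW
  set T : V →ₗ[K] V := (LinearMap.id : V →ₗ[K] V) - G with hT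
  have hTx : ∀ x, T x = x - G x := fun x => rfl
  have hmem : ∀ x ∈ W, T x ∈ W := by
    intro x hx
    rw [hTx]
    exact W.sub_mem hx (LinearMap.mem_range_self G x)
  set T' : W →ₗ[K] W := T.restrict hmem with hT'
  have hT'val : ∀ (x : W), (T' x : V) = T x := fun x => rfl
  constructor
  · intro hinj
    have hinj' : Function.Injective T' := by
      intro a b hab
      exact Subtype.ext (hinj (by simpa [hT'val] using congrArg Subtype.val hab))
    have hsurj' : Function.Surjective T' := LinearMap.injective_iff_surjective.mp hinj'
    intro x
    obtain ⟨⟨w, hw⟩, hTw⟩ := hsurj' ⟨G x, LinearMap.mem_range_self G x⟩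
    have hTw' : T w = G x := congrArg Subtype.val hTw
    refine ⟨x + w, ?_⟩
    rw [hTx] at hTw' ⊢
    rw [map_add]
    have hGw : G w = w - G x := by rw [← hTw']; abel
    rw [hGw]; abel
  · intro hsurj
    have hsurj' : Function.Surjective T' := by
      rintro ⟨w, hw⟩
      obtain ⟨v, hv⟩ := hsurj w
      rw [hTx] at hv
      have hvW : v ∈ W := by
        have hveq : v = w + G v := by rw [← hv]; abel
        rw [hveq]
        exact W.add_mem hw (LinearMap.mem_range_self G v)
      refine ⟨⟨v, hvW⟩, Subtype.ext ?_⟩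
      simpa [hT'val, hTx] using hv
    have hinj' : Function.Injective T' := LinearMap.injective_iff_surjective.mpr hsurj'
    rw [← LinearMap.ker_eq_bot]
    rw [Submodule.eq_bot_iff]
    intro x hx
    rw [LinearMap.mem_ker] at hx
    have hxW : x ∈ W := by
      rw [hTx] at hx
      have : x = G x := by rw [sub_eq_zero] at hx; exact hx
      rw [this]; exact LinearMap.mem_range_self G x
    have : T' ⟨x, hxW⟩ = 0 := Subtype.ext (by simpa [hT'val] using hx)
    have h0 : (⟨x, hxW⟩ : W) = 0 := hinj' (by simpa using this)
    exact congrArg Subtype.val h0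

theorem stmt_4 {K V : Type*} [Field K] [AddCommGroup V] [Module K V]
    (R F : V →ₗ[K] V) (hR : Function.Bijective ⇑R)
    [FiniteDimensional K ↥(LinearMap.range F)] :
    Function.Injective ⇑(R - F) ↔ Function.Surjective ⇑(R - F) := by
  let e := LinearEquiv.ofBijective R hR
  let G : V →ₗ[K] V := (e.symm : V →ₗ[K] V) ∘ₗ F
  have hrange : LinearMap.range G = (LinearMap.range F).map (e.symm : V →ₗ[K] V) :=
    LinearMap.range_comp _ _
  haveI : FiniteDimensional K ↥(LinearMap.range G) := by
    rw [hrange]; infer_instance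
  have key : R - F = R ∘ₗ ((LinearMap.id : V →ₗ[K] V) - G) := by
    ext x
    show R x - F x = R (x - e.symm (F x))
    have h1 : R (x - e.symm (F x)) = R x - R (e.symm (F x)) := map_sub R _ _
    have h2 : R (e.symm (F x)) = F x := e.apply_symm_apply (F x)
    rw [h1, h2]
  rw [key, LinearMap.coe_comp]
  constructor
  · intro h
    intro y
    obtain ⟨z, hz⟩ := hR.surjective y
    have hinjT : Function.Injective ⇑((LinearMap.id : V →ₗ[K] V) - G) := by
      intro a b hab
      exact h (show R _ = R _ from congrArg R hab)
    obtain ⟨w, hw⟩ := (aux_fredholm G).mp hinjT z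
    exact ⟨w, by simp [Function.comp, hw, hz]⟩
  · intro h
    have hsurjT : Function.Surjective ⇑((LinearMap.id : V →ₗ[K] V) - G) := by
      intro y
      obtain ⟨w, hw⟩ := h (R y)
      exact ⟨w, hR.injective (by simpa [Function.comp] using hw)⟩
    have hinjT := (aux_fredholm G).mpr hsurjT
    exact hR.injective.comp hinjT
end

section
/- Let T be a bounded linear operator on a Banach space E. Suppose there exists a continuous finite-rank operator F on E such that ‖T - F‖ < 1. Then either I - T is invertible as a bounded operator (has a bounded linear inverse), or there exists a nonzero vector y ∈ E with T y = y. -/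
theorem stmt_6 {𝕜 E : Type*} [RCLike 𝕜] [NormedAddCommGroup E] [NormedSpace 𝕜 E]
    [CompleteSpace E] (T F : E →L[𝕜] E)
    [FiniteDimensional 𝕜 ↥(LinearMap.range (F : E →ₗ[𝕜] E))]
    (hF : ‖T - F‖ < 1) :
    IsUnit (1 - T) ∨ ∃ y : E, y ≠ 0 ∧ T y = y := by
  have hU : IsUnit (1 - (T - F)) := isUnit_one_sub_of_norm_lt_one hF
  obtain ⟨u, hu⟩ := hU
  set V : E →L[𝕜] E := (↑u⁻¹ : E →L[𝕜] E) with hV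
  set K : E →L[𝕜] E := V * F with hK
  have hfact : (1 : E →L[𝕜] E) - T = (u : E →L[𝕜] E) * (1 - K) := by
    have : (u : E →L[𝕜] E) * K = F := by
      rw [hK, ← mul_assoc, hV, Units.mul_inv, one_mul]
    rw [mul_sub, mul_one, this, hu]
    abel
  -- finite-dimensional subspace containing range of K
  set W : Submodule 𝕜 E := Submodule.map (V : E →ₗ[𝕜] E) (LinearMap.range (F : E →ₗ[𝕜] E)) with hW
  haveI : FiniteDimensional 𝕜 W := Module.Finite.map _ _
  have hKW : ∀ x : E, K x ∈ W := by
    intro x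
    exact ⟨F x, ⟨x, rfl⟩, rfl⟩
  by_cases hinj : Function.Injective (1 - K : E →L[𝕜] E)
  · left
    rw [hfact]
    refine (u.isUnit).mul ?_
    rw [ContinuousLinearMap.isUnit_iff_bijective]
    refine ⟨hinj, ?_⟩
    -- restriction of 1 - K to W
    have hWinv : ∀ x ∈ W, (1 - K : E →L[𝕜] E) x ∈ W := by
      intro x hx
      simp only [ContinuousLinearMap.sub_apply, ContinuousLinearMap.one_apply]
      exact W.sub_mem hx (hKW x)
    set g : W →ₗ[𝕜] W := LinearMap.restrict ((1 - K : E →L[𝕜] E) : E →ₗ[𝕜] E) hWinv with hg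
    have hginj : Function.Injective g := by
      intro a b hab
      have := congrArg (Subtype.val) hab
      exact Subtype.ext (hinj this)
    have hgsurj : Function.Surjective g := (LinearMap.injective_iff_surjective).1 hginj
    intro y
    obtain ⟨z, hz⟩ := hgsurj ⟨K y, hKW y⟩
    refine ⟨y + z, ?_⟩
    have hz' : (1 - K : E →L[𝕜] E) (z : E) = K y := congrArg (Subtype.val) hz
    have : (1 - K : E →L[𝕜] E) (y + z) = (1 - K : E →L[𝕜] E) y + K y := by
      rw [map_add, hz']
    rw [this]
    simp
  · right
    rw [Function.not_injective_iff] at hinj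
    obtain ⟨a, b, hab, hne⟩ := hinj
    refine ⟨a - b, sub_ne_zero.2 hne, ?_⟩
    have h1 : (1 - K : E →L[𝕜] E) (a - b) = 0 := by
      rw [map_sub, hab, sub_self]
    have h2 : (1 - T : E →L[𝕜] E) (a - b) = 0 := by
      rw [hfact]
      simp only [ContinuousLinearMap.mul_apply, h1, map_zero]
    have := h2
    simp only [ContinuousLinearMap.sub_apply, ContinuousLinearMap.one_apply, sub_eq_zero] at this
    exact this.symm
end

section
/- Let T be a bounded linear operator on a Banach space E such that there exists a continuous finite-rank operator F with ‖T - F‖ < 1. If I - T is injective, then I - T is surjective. -/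
theorem aux_finrank {𝕜 E : Type*} [RCLike 𝕜] [NormedAddCommGroup E] [NormedSpace 𝕜 E]
    (S : E →L[𝕜] E) [FiniteDimensional 𝕜 ↥(LinearMap.range (S : E →ₗ[𝕜] E))]
    (hinj : Function.Injective ⇑(1 - S)) : Function.Surjective ⇑(1 - S) := by
  set V := LinearMap.range (S : E →ₗ[𝕜] E) with hV
  set g : E →ₗ[𝕜] E := ((1 - S : E →L[𝕜] E) : E →ₗ[𝕜] E) with hg
  have hmem : ∀ x ∈ V, g x ∈ V := by
    intro x hx
    have : g x = x - S x := by
      simp [hg, ContinuousLinearMap.sub_apply]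
    rw [this]
    exact V.sub_mem hx (LinearMap.mem_range_self _ x)
  set f : V →ₗ[𝕜] V := g.restrict hmem with hf
  have hfinj : Function.Injective f := by
    intro a b hab
    have : g a = g b := congrArg Subtype.val hab
    exact Subtype.ext (hinj this)
  have hfsurj : Function.Surjective f := (LinearMap.injective_iff_surjective).mp hfinj
  intro y
  obtain ⟨v, hv⟩ := hfsurj ⟨S y, LinearMap.mem_range_self _ y⟩
  refine ⟨y + v, ?_⟩
  have hgv : g v = S y := congrArg Subtype.val hv
  have : (1 - S) (y + v) = (y - S y) + g (v : E) := by
    simp [hg, ContinuousLinearMap.sub_apply]; abel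
  rw [this, hgv]; abel

theorem stmt_7 {𝕜 E : Type*} [RCLike 𝕜] [NormedAddCommGroup E] [NormedSpace 𝕜 E]
    [CompleteSpace E] (T F : E →L[𝕜] E)
    [FiniteDimensional 𝕜 ↥(LinearMap.range (F : E →ₗ[𝕜] E))]
    (hF : ‖T - F‖ < 1) (hinj : Function.Injective ⇑(1 - T)) :
    Function.Surjective ⇑(1 - T) := by
  let u : (E →L[𝕜] E)ˣ := Units.oneSub (T - F) hF
  set S : E →L[𝕜] E := u.inv * F with hS
  have key : (1 - T : E →L[𝕜] E) = u.val * (1 - S) := by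
    have : u.val = 1 - (T - F) := Units.val_oneSub _ _
    rw [hS, mul_sub, mul_one, ← mul_assoc]
    rw [this]
    have huu : u.val * u.inv = 1 := u.val_inv
    calc (1 : E →L[𝕜] E) - T = (1 - (T - F)) - F := by abel
    _ = (1 - (T - F)) - (1 - (T - F)) * u.inv * F := by
        rw [← this, huu, one_mul]
    _ = _ := rfl
  have happ : ∀ x, (1 - T) x = u.val ((1 - S) x) := by
    intro x; rw [key]; rfl
  have hSinj : Function.Injective ⇑(1 - S) := by
    intro a b hab
    apply hinj
    rw [happ, happ, hab]
  have hfin : FiniteDimensional 𝕜 ↥(LinearMap.range (S : E →ₗ[𝕜] E)) := by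
    have hcomp : (S : E →ₗ[𝕜] E) = (u.inv : E →L[𝕜] E).toLinearMap ∘ₗ (F : E →ₗ[𝕜] E) := rfl
    rw [hcomp, LinearMap.range_comp]
    exact Module.Finite.map _ _
  have hSsurj := aux_finrank S hSinj
  intro y
  obtain ⟨x, hx⟩ := hSsurj (u.inv y)
  refine ⟨x, ?_⟩
  rw [happ, hx]
  have h2 : (u.val * u.inv) y = y := by rw [u.val_inv]; rfl
  exact h2
end

section
/- Let T be a compact operator on a Hilbert space H. Then I - T is injective if and only if I - T is surjective. -/
section
set_option linter.unusedSectionVars false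
variable {𝕜 H : Type*} [RCLike 𝕜] [NormedAddCommGroup H]
    [InnerProductSpace 𝕜 H] [CompleteSpace H]

-- compactness: no sequence in the unit sphere with T-images 1/2-separated
lemma no_sep_seq (T : H →L[𝕜] H) (hT : IsCompactOperator T) (x : ℕ → H)
    (hx : ∀ n, ‖x n‖ = 1) (hsep : ∀ m n, m < n → (1:ℝ)/2 ≤ ‖T (x m) - T (x n)‖) : False := by
  have hK : IsCompact (closure (T '' Metric.closedBall 0 1)) :=
    IsCompactOperator.isCompact_closure_image_closedBall (f := (T : H →ₗ[𝕜] H)) hT 1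
  have hmem : ∀ n, T (x n) ∈ closure (T '' Metric.closedBall 0 1) := fun n =>
    subset_closure ⟨x n, by simp [hx n], rfl⟩
  obtain ⟨a, -, φ, hφ, hconv⟩ := hK.tendsto_subseq hmem
  have hcauchy := hconv.cauchySeq
  rw [Metric.cauchySeq_iff] at hcauchy
  obtain ⟨N, hN⟩ := hcauchy (1/2) (by norm_num)
  have := hsep (φ N) (φ (N+1)) (hφ (by omega))
  have := hN (N+1) (by omega) N (le_refl N)
  rw [dist_eq_norm] at this
  simp only [Function.comp] at this
  rw [norm_sub_rev] at this
  linarith [hsep (φ N) (φ (N+1)) (hφ (by omega))]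

-- Riesz lemma for a pair of submodules
lemma riesz_pair (F G : Submodule 𝕜 H) (hFc : IsClosed (F : Set H)) (hle : F ≤ G)
    (g : H) (hgG : g ∈ G) (hgF : g ∉ F) :
    ∃ x, x ∈ G ∧ ‖x‖ = 1 ∧ ∀ y ∈ F, (1:ℝ)/2 ≤ ‖x - y‖ := by
  have hne : (F : Set H).Nonempty := ⟨0, F.zero_mem⟩
  have hd : 0 < Metric.infDist g (F : Set H) :=
    (hFc.notMem_iff_infDist_pos hne).1 hgF
  set d := Metric.infDist g (F : Set H) with hdd
  obtain ⟨y₀, hy₀F, hy₀⟩ := (Metric.infDist_lt_iff hne).1 (show d < 2 * d by linarith)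
  set x₀ := g - y₀ with hx₀
  have hx₀G : x₀ ∈ G := G.sub_mem hgG (hle hy₀F)
  have hx₀norm : ‖x₀‖ < 2 * d := by rwa [hx₀, ← dist_eq_norm]
  have hx₀pos : 0 < ‖x₀‖ := by
    rw [norm_pos_iff]
    intro h
    have : g = y₀ := by rwa [hx₀, sub_eq_zero] at h
    exact hgF (this ▸ hy₀F)
  have key : ∀ y ∈ F, d ≤ ‖x₀ - y‖ := by
    intro y hy
    have : y₀ + y ∈ (F : Set H) := F.add_mem hy₀F hy
    have := Metric.infDist_le_dist_of_mem (x := g) this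
    rw [dist_eq_norm] at this
    calc d ≤ ‖g - (y₀ + y)‖ := this
      _ = ‖x₀ - y‖ := by rw [hx₀, sub_add_eq_sub_sub]
  set c : 𝕜 := ((‖x₀‖⁻¹ : ℝ) : 𝕜) with hc
  have hcnorm : ‖c‖ = ‖x₀‖⁻¹ := by
    rw [hc, RCLike.norm_ofReal, abs_of_pos (inv_pos.2 hx₀pos)]
  have hc0 : c ≠ 0 := by
    simp [hc, RCLike.ofReal_eq_zero, ne_of_gt hx₀pos]
  refine ⟨c • x₀, G.smul_mem c hx₀G, ?_, ?_⟩
  · rw [norm_smul, hcnorm, inv_mul_cancel₀ (ne_of_gt hx₀pos)]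
  · intro y hy
    have hy' : c⁻¹ • y ∈ F := F.smul_mem _ hy
    have := key _ hy'
    have heq : ‖c • x₀ - y‖ = ‖x₀‖⁻¹ * ‖x₀ - c⁻¹ • y‖ := by
      have h3 : c • x₀ - y = c • (x₀ - c⁻¹ • y) := by
        conv_rhs => rw [smul_sub, smul_inv_smul₀ hc0]
      rw [h3, norm_smul, hcnorm]
    rw [heq]
    have h1 : ‖x₀‖⁻¹ * d ≤ ‖x₀‖⁻¹ * ‖x₀ - c⁻¹ • y‖ :=
      mul_le_mul_of_nonneg_left this (by positivity)
    have h2 : (1:ℝ)/2 ≤ ‖x₀‖⁻¹ * d := by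
      rw [inv_mul_eq_div, le_div_iff₀ hx₀pos]
      linarith
    linarith

-- bounded below lemma
lemma bdd_below_of_inj (T : H →L[𝕜] H) (hT : IsCompactOperator T)
    (hinj : Function.Injective ⇑(1 - T)) :
    ∃ c : ℝ, 0 < c ∧ ∀ x, c * ‖x‖ ≤ ‖(1 - T) x‖ := by
  by_contra hcon
  push_neg at hcon
  have hseq : ∀ n : ℕ, ∃ u : H, ‖u‖ = 1 ∧ ‖(1 - T) u‖ < 1/(n+1) := by
    intro n
    obtain ⟨x, hx⟩ := hcon (1/(n+1)) (by positivity)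
    have hxpos : 0 < ‖x‖ := by
      by_contra h
      push_neg at h
      have : ‖x‖ = 0 := le_antisymm h (norm_nonneg x)
      rw [this, mul_zero] at hx
      exact absurd hx (not_lt.2 (norm_nonneg _))
    refine ⟨((‖x‖⁻¹ : ℝ) : 𝕜) • x, ?_, ?_⟩
    · rw [norm_smul, RCLike.norm_ofReal, abs_of_pos (inv_pos.2 hxpos),
        inv_mul_cancel₀ (ne_of_gt hxpos)]
    · rw [map_smul, norm_smul, RCLike.norm_ofReal, abs_of_pos (inv_pos.2 hxpos)]
      rw [inv_mul_lt_iff₀ hxpos]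
      calc ‖(1 - T) x‖ < 1/(n+1) * ‖x‖ := hx
        _ = ‖x‖ * (1/(n+1)) := by ring
  choose u hu1 hu2 using hseq
  have hK : IsCompact (closure (T '' Metric.closedBall 0 1)) :=
    IsCompactOperator.isCompact_closure_image_closedBall (f := (T : H →ₗ[𝕜] H)) hT 1
  have hmem : ∀ n, T (u n) ∈ closure (T '' Metric.closedBall 0 1) := fun n =>
    subset_closure ⟨u n, by simp [hu1 n], rfl⟩
  obtain ⟨a, -, φ, hφ, hconv⟩ := hK.tendsto_subseq hmem
  have hA0 : Filter.Tendsto (fun n => (1 - T) (u (φ n))) Filter.atTop (nhds 0) := by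
    apply squeeze_zero_norm (a := fun n : ℕ => 1/((n:ℝ)+1))
    · intro n
      refine le_trans (le_of_lt (hu2 (φ n))) ?_
      have : (n : ℝ) + 1 ≤ (φ n : ℝ) + 1 := by
        have h5 : n ≤ φ n := hφ.le_apply
        have := (Nat.cast_le (α := ℝ)).2 h5
        linarith
      exact one_div_le_one_div_of_le (by positivity) this
    · exact tendsto_one_div_add_atTop_nhds_zero_nat
  have huconv : Filter.Tendsto (fun n => u (φ n)) Filter.atTop (nhds a) := by
    have : (fun n => u (φ n)) = fun n => (1 - T) (u (φ n)) + T (u (φ n)) := by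
      funext n
      simp [ContinuousLinearMap.sub_apply]
    rw [this]
    simpa using hA0.add hconv
  have hnorm_a : ‖a‖ = 1 := by
    have h := (continuous_norm.tendsto a).comp huconv
    simp only [Function.comp_def, hu1] at h
    exact tendsto_nhds_unique h tendsto_const_nhds
  have hAa : (1 - T) a = 0 := by
    have h1 : Filter.Tendsto (fun n => (1 - T) (u (φ n))) Filter.atTop (nhds ((1 - T) a)) :=
      ((1 - T).continuous.tendsto a).comp huconv
    exact tendsto_nhds_unique h1 hA0
  have : a = 0 := hinj (by simpa using hAa)
  rw [this, norm_zero] at hnorm_a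
  norm_num at hnorm_a

end

theorem stmt_14 {𝕜 H : Type*} [RCLike 𝕜] [NormedAddCommGroup H]
    [InnerProductSpace 𝕜 H] [CompleteSpace H]
    (T : H →L[𝕜] H) (hT : IsCompactOperator T) :
    Function.Injective ⇑(1 - T) ↔ Function.Surjective ⇑(1 - T) := by
  set A : H →L[𝕜] H := 1 - T with hA
  have hTA : ∀ u v : H, T u - T v = u - (A u + v - A v) := by
    intro u v
    simp only [hA, ContinuousLinearMap.sub_apply, ContinuousLinearMap.one_apply]
    abel
  constructor
  · -- injective → surjective
    intro hinj
    by_contra hsurj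
    rw [Function.Surjective] at hsurj
    push_neg at hsurj
    obtain ⟨y, hy⟩ := hsurj
    obtain ⟨c, hc, hbdd⟩ := bdd_below_of_inj T hT hinj
    have hinjn : ∀ n, Function.Injective ⇑(A^n) := by
      intro n
      induction n with
      | zero => simpa using Function.injective_id
      | succ n ih =>
        intro u v huv
        have h2 : (A^n) (A u) = (A^n) (A v) := by
          rw [← ContinuousLinearMap.mul_apply, ← ContinuousLinearMap.mul_apply, ← pow_succ]
          exact huv
        exact hinj (ih h2)
    have hbddn : ∀ n x, c^n * ‖x‖ ≤ ‖(A^n) x‖ := by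
      intro n
      induction n with
      | zero => intro x; simp
      | succ n ih =>
        intro x
        calc c^(n+1) * ‖x‖ = c^n * (c * ‖x‖) := by ring
          _ ≤ c^n * ‖A x‖ := mul_le_mul_of_nonneg_left (hbdd x) (by positivity)
          _ ≤ ‖(A^n) (A x)‖ := ih (A x)
          _ = ‖(A^(n+1)) x‖ := by rw [← ContinuousLinearMap.mul_apply, ← pow_succ]
    set R : ℕ → Submodule 𝕜 H := fun n => LinearMap.range ((A^n : H →L[𝕜] H) : H →ₗ[𝕜] H) with hR
    have hRclosed : ∀ n, IsClosed (R n : Set H) := by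
      intro n
      have hanti : AntilipschitzWith ((c^n)⁻¹.toNNReal) ⇑(A^n) := by
        apply ContinuousLinearMap.antilipschitz_of_bound
        intro x
        rw [Real.coe_toNNReal _ (by positivity)]
        have h1 := hbddn n x
        rw [mul_comm, ← le_div_iff₀ (by positivity : (0:ℝ) < c^n)] at h1
        rwa [div_eq_inv_mul] at h1
      have h2 : (R n : Set H) = Set.range ⇑(A^n) := LinearMap.coe_range _
      rw [h2]
      exact hanti.isClosed_range (A^n).uniformContinuous
    have hRsucc : ∀ n, R (n+1) ≤ R n := by
      intro n w hw
      obtain ⟨z, hz⟩ := hw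
      exact ⟨A z, by rw [← hz]; simp only [ContinuousLinearMap.coe_coe]; rw [← ContinuousLinearMap.mul_apply, ← pow_succ]⟩
    have hRanti : Antitone R := antitone_nat_of_succ_le hRsucc
    have hstep : ∀ n (v : H), v ∈ R n → A v ∈ R (n+1) := by
      intro n v hv
      obtain ⟨z, hz⟩ := hv
      exact ⟨z, by simp only [ContinuousLinearMap.coe_coe] at hz ⊢; rw [pow_succ', ContinuousLinearMap.mul_apply, hz]⟩
    have hwit : ∀ n, ∃ g, g ∈ R n ∧ g ∉ R (n+1) := by
      intro n
      refine ⟨(A^n) y, ⟨y, rfl⟩, ?_⟩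
      rintro ⟨z, hz⟩
      have h3 : (A^n) (A z) = (A^n) y := by
        rw [← ContinuousLinearMap.mul_apply, ← pow_succ]; exact hz
      exact hy z (hinjn n h3)
    have hriesz : ∀ n, ∃ x, x ∈ R n ∧ ‖x‖ = 1 ∧ ∀ w ∈ R (n+1), (1:ℝ)/2 ≤ ‖x - w‖ := by
      intro n
      obtain ⟨g, hg1, hg2⟩ := hwit n
      exact riesz_pair (R (n+1)) (R n) (hRclosed (n+1)) (hRsucc n) g hg1 hg2
    choose x hx1 hx2 hx3 using hriesz
    apply no_sep_seq T hT x hx2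
    intro m n hmn
    have hw : A (x m) + x n - A (x n) ∈ R (m+1) := by
      refine Submodule.sub_mem _ (Submodule.add_mem _ (hstep m _ (hx1 m)) ?_) ?_
      · exact hRanti hmn (hx1 n)
      · exact hRanti (by omega : m+1 ≤ n+1) (hstep n _ (hx1 n))
    rw [hTA (x m) (x n)]
    exact hx3 m _ hw
  · -- surjective → injective
    intro hsurj
    by_contra hninj
    rw [Function.Injective] at hninj
    push_neg at hninj
    obtain ⟨a, b, hab, hne⟩ := hninj
    set x₁ := a - b with hx₁
    have hx₁0 : x₁ ≠ 0 := sub_ne_zero.2 hne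
    have hAx₁ : A x₁ = 0 := by rw [hx₁, map_sub, hab, sub_self]
    choose s hs using hsurj
    set z : ℕ → H := fun n => s^[n] x₁ with hz
    have hzs : ∀ n, A (z (n+1)) = z n := by
      intro n
      rw [hz]
      simp only [Function.iterate_succ_apply']
      exact hs _
    have hkey : ∀ n, (A^n) (z n) = x₁ := by
      intro n
      induction n with
      | zero => simp [hz]
      | succ n ih =>
        rw [pow_succ, ContinuousLinearMap.mul_apply, hzs n, ih]
    set N : ℕ → Submodule 𝕜 H := fun n => LinearMap.ker ((A^n : H →L[𝕜] H) : H →ₗ[𝕜] H) with hN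
    have hNclosed : ∀ n, IsClosed (N n : Set H) := fun n =>
      ContinuousLinearMap.isClosed_ker (A^n)
    have hNsucc : ∀ n, N n ≤ N (n+1) := by
      intro n w hw
      have hw' : (A^n) w = 0 := hw
      show (A^(n+1)) w = 0
      rw [pow_succ', ContinuousLinearMap.mul_apply, hw', map_zero]
    have hNmono : Monotone N := monotone_nat_of_le_succ hNsucc
    have hstep : ∀ n (v : H), v ∈ N (n+1) → A v ∈ N n := by
      intro n v hv
      have hv' : (A^(n+1)) v = 0 := hv
      show (A^n) (A v) = 0
      rw [← ContinuousLinearMap.mul_apply, ← pow_succ]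
      exact hv'
    have hwitin : ∀ n, z n ∈ N (n+1) := by
      intro n
      show (A^(n+1)) (z n) = 0
      rw [pow_succ', ContinuousLinearMap.mul_apply, hkey n]
      exact hAx₁
    have hwitout : ∀ n, z n ∉ N n := by
      intro n hmem
      exact hx₁0 (by rw [← hkey n]; exact hmem)
    have hriesz : ∀ n, ∃ x, x ∈ N (n+1) ∧ ‖x‖ = 1 ∧ ∀ w ∈ N n, (1:ℝ)/2 ≤ ‖x - w‖ := by
      intro n
      exact riesz_pair (N n) (N (n+1)) (hNclosed n) (hNsucc n) (z n) (hwitin n) (hwitout n)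
    choose x hx1 hx2 hx3 using hriesz
    apply no_sep_seq T hT x hx2
    intro m n hmn
    have hw : A (x n) + x m - A (x m) ∈ N n := by
      refine Submodule.sub_mem _ (Submodule.add_mem _ (hstep n _ (hx1 n)) ?_) ?_
      · exact hNmono (by omega : m+1 ≤ n) (hx1 m)
      · exact hNmono (by omega : m ≤ n) (hstep m _ (hx1 m))
    rw [norm_sub_rev, hTA (x n) (x m)]
    exact hx3 n _ hw
end

section
/- Let T : V → V be a linear operator on a vector space V, and F a finite-rank linear operator such that R := I - (T - F) is bijective. If there is no nonzero y ∈ V with T y = y, then I - T is bijective. -/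
theorem stmt_19 {K V : Type*} [Field K] [AddCommGroup V] [Module K V]
    (T F : V →ₗ[K] V) [FiniteDimensional K ↥(LinearMap.range F)]
    (hR : Function.Bijective ⇑((LinearMap.id : V →ₗ[K] V) - (T - F)))
    (h : ∀ y : V, T y = y → y = 0) :
    Function.Bijective ⇑((LinearMap.id : V →ₗ[K] V) - T) := by
  set R : V →ₗ[K] V := (LinearMap.id : V →ₗ[K] V) - (T - F) with hRdef
  let e : V ≃ₗ[K] V := LinearEquiv.ofBijective R hR
  have he : ∀ x, e x = R x := fun x => rfl
  set S : V →ₗ[K] V := e.symm.toLinearMap ∘ₗ F with hSdef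
  -- key identity: R (x - S x) = x - T x
  have key : ∀ x : V, R (x - S x) = x - T x := by
    intro x
    have h1 : R (S x) = F x := by
      have h2 : R (e.symm (F x)) = e (e.symm (F x)) := rfl
      simp only [hSdef, LinearMap.comp_apply, LinearEquiv.coe_coe, h2,
        LinearEquiv.apply_symm_apply]
    rw [map_sub, h1, hRdef]
    simp only [LinearMap.sub_apply, LinearMap.id_apply]
    abel
  -- injectivity of id - T
  have hinjT : Function.Injective ⇑((LinearMap.id : V →ₗ[K] V) - T) := by
    rw [injective_iff_map_eq_zero]
    intro a ha
    simp only [LinearMap.sub_apply, LinearMap.id_apply] at ha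
    exact h a (by rw [← sub_eq_zero]; rw [sub_eq_zero] at ha ⊢; exact ha.symm)
  -- injectivity of id - S
  have hinjS : ∀ x : V, x - S x = 0 → x = 0 := by
    intro x hx
    have : R (x - S x) = 0 := by rw [hx, map_zero]
    rw [key] at this
    have := hinjT (a₁ := x) (a₂ := 0) (by
      simp only [LinearMap.sub_apply, LinearMap.id_apply, map_zero, sub_zero,
        sub_eq_zero] at this ⊢
      simpa [sub_eq_zero] using this)
    exact this
  -- finite dimensional subspace W = range S
  set W : Submodule K V := LinearMap.range S with hWdef
  have hWfin : FiniteDimensional K W := by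
    have : W = (LinearMap.range F).map e.symm.toLinearMap := by
      rw [hWdef, hSdef, LinearMap.range_comp]
    rw [this]
    exact Module.Finite.map (LinearMap.range F) e.symm.toLinearMap
  -- restriction of id - S to W
  have hmem : ∀ x ∈ W, x - S x ∈ W := fun x hx =>
    W.sub_mem hx (LinearMap.mem_range_self S x)
  let g : W →ₗ[K] W := ((LinearMap.id : V →ₗ[K] V) - S).restrict
    (by intro x hx; simpa using hmem x hx)
  have hg : ∀ w : W, (g w : V) = (w : V) - S w := fun w => rfl
  have hginj : Function.Injective g := by
    rw [injective_iff_map_eq_zero]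
    intro w hw
    have : (w : V) - S w = 0 := by
      have := congrArg (Subtype.val) hw
      rw [hg] at this; exact this
    exact Subtype.ext (hinjS w this)
  have hgsurj : Function.Surjective g :=
    (LinearMap.injective_iff_surjective).mp hginj
  constructor
  · exact hinjT
  · -- surjectivity
    intro v
    obtain ⟨u, hu⟩ : ∃ u, R u = v := hR.2 v
    obtain ⟨w, hw⟩ := hgsurj ⟨S u, LinearMap.mem_range_self S u⟩
    have hw' : (w : V) - S w = S u := by
      have := congrArg (Subtype.val) hw
      rw [hg] at this; exact this
    refine ⟨u + w, ?_⟩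
    have : (u + (w : V)) - S (u + w) = u := by
      rw [map_add]
      have : (u : V) + w - (S u + S w) = u + ((w : V) - S w - S u) := by abel
      rw [this, hw']
      simp
    have h2 := key (u + w)
    rw [this, hu] at h2
    simpa [LinearMap.sub_apply] using h2.symm
end
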